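/- If the partition X_0 < X_1 < ⋯ < X_n satisfies the equidistribution equation with γ = 2/5, then sqrt( Σ_{i=0}^{n−1} ∫_{X_i}^{X_{i+1}} (L_i(S) − f(S))² g(S) dS ) ≤ sqrt( 2⁶ · α_h · (X_n − X_0)⁵ ) · n^{−2}. -/

import Mathlib

open MeasureTheory intervalIntegral

/-- `Ĝ_i` transported to the subinterval `[a, b]`:
`G(S) = Ĝ_i((S - a)/(b - a))` where `ĝ_i(ξ) = g(a + (b - a)ξ)` and
`Ĝ_i(t) = ∫_0^t ĝ_i(ξ) ξ²(1-ξ)³/3 dξ + ∫_t^1 ĝ_i(ξ) (1-ξ)²ξ³/3 dξ`. -/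
noncomputable def weightG (g : ℝ → ℝ) (a b S : ℝ) : ℝ :=
    (∫ ξ in (0:ℝ)..((S - a) / (b - a)), g (a + (b - a) * ξ) * (ξ ^ 2 * (1 - ξ) ^ 3 / 3))
  + (∫ ξ in ((S - a) / (b - a))..(1:ℝ), g (a + (b - a) * ξ) * ((1 - ξ) ^ 2 * ξ ^ 3 / 3))

/-- Linear interpolant of `f` on `[a, b]`:
`L(S) = ((b - S)/(b - a)) f(a) + ((S - a)/(b - a)) f(b)`. -/
noncomputable def splineL (f : ℝ → ℝ) (a b S : ℝ) : ℝ :=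
  ((b - S) / (b - a)) * f a + ((S - a) / (b - a)) * f b

/-- The weighted curvature integral `∫_a^b G(S) (f″(S))² dS` on a subinterval `[a, b]`. -/
noncomputable def curvInt (f g : ℝ → ℝ) (a b : ℝ) : ℝ :=
  ∫ S in a..b, weightG g a b S * (deriv (deriv f) S) ^ 2

/-- The intensity parameter
`α_h = [(1/(X_n − X_0)) Σ_i h_i ((1/h_i) ∫_{X_i}^{X_{i+1}} G(S)(f″(S))² dS)^{γ/2}]^{2/γ}`. -/
noncomputable def alphaH (f g : ℝ → ℝ) (γ : ℝ) (n : ℕ) (X : ℕ → ℝ) : ℝ :=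
  ((1 / (X n - X 0)) * ∑ i ∈ Finset.range n, (X (i + 1) - X i) *
      ((1 / (X (i + 1) - X i)) * curvInt f g (X i) (X (i + 1))) ^ (γ / 2)) ^ (2 / γ)

/-- The adaptation function
`ρ_i = (1 + (1/(α_h h_i)) ∫_{X_i}^{X_{i+1}} G(S)(f″(S))² dS)^{γ/2}`. -/
noncomputable def rhoAdapt (f g : ℝ → ℝ) (γ : ℝ) (n : ℕ) (X : ℕ → ℝ) (i : ℕ) : ℝ :=
  (1 + (1 / (alphaH f g γ n X * (X (i + 1) - X i))) * curvInt f g (X i) (X (i + 1))) ^ (γ / 2)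

open Set

-- Cauchy–Schwarz for integrals
lemma cs_integral (μ : Measure ℝ) (f g : ℝ → ℝ)
    (hf : Integrable (fun x => f x ^ 2) μ) (hg : Integrable (fun x => g x ^ 2) μ)
    (hfg : Integrable (fun x => f x * g x) μ) :
    (∫ x, f x * g x ∂μ) ^ 2 ≤ (∫ x, f x ^ 2 ∂μ) * (∫ x, g x ^ 2 ∂μ) := by
  set A := ∫ x, f x ^ 2 ∂μ with hA
  set B := ∫ x, g x ^ 2 ∂μ with hB
  set C := ∫ x, f x * g x ∂μ with hC
  have hA0 : 0 ≤ A := integral_nonneg fun x => sq_nonneg _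
  have hB0 : 0 ≤ B := integral_nonneg fun x => sq_nonneg _
  rcases eq_or_lt_of_le hB0 with h0 | hpos
  · have hgz : g =ᵐ[μ] 0 := by
      have h1 := (integral_eq_zero_iff_of_nonneg (fun x => sq_nonneg (g x)) hg).mp h0.symm
      filter_upwards [h1] with x hx
      exact pow_eq_zero_iff two_ne_zero |>.mp hx
    have hCz : C = 0 := by
      rw [hC]
      have h2 : (fun x => f x * g x) =ᵐ[μ] 0 := by
        filter_upwards [hgz] with x hx; simp [hx]
      rw [integral_congr_ae h2]; simp
    rw [hCz, ← h0]
    simp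
  · have key : 0 ≤ ∫ x, (B * f x - C * g x) ^ 2 ∂μ := integral_nonneg fun x => sq_nonneg _
    have e1 : ∫ x, B ^ 2 * f x ^ 2 ∂μ = B ^ 2 * A := by
      rw [hA]; exact MeasureTheory.integral_const_mul _ _
    have e2 : ∫ x, 2 * B * C * (f x * g x) ∂μ = 2 * B * C * C := by
      rw [hC]; exact MeasureTheory.integral_const_mul _ _
    have e3 : ∫ x, C ^ 2 * g x ^ 2 ∂μ = C ^ 2 * B := by
      rw [hB]; exact MeasureTheory.integral_const_mul _ _
    have i1 : Integrable (fun x => B ^ 2 * f x ^ 2 - 2 * B * C * (f x * g x)) μ :=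
      (hf.const_mul _).sub (hfg.const_mul _)
    have comb : ∫ x, (B * f x - C * g x) ^ 2 ∂μ
        = (∫ x, B ^ 2 * f x ^ 2 ∂μ) - (∫ x, 2 * B * C * (f x * g x) ∂μ)
          + ∫ x, C ^ 2 * g x ^ 2 ∂μ := by
      rw [← MeasureTheory.integral_sub (hf.const_mul _) (hfg.const_mul _),
        ← MeasureTheory.integral_add i1 (hg.const_mul _)]
      exact integral_congr_ae (Filter.Eventually.of_forall fun x => by ring)
    rw [e1, e2, e3] at comb
    nlinarith [key, comb, hpos]

-- interval Cauchy–Schwarz for continuous functions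
lemma cs_interval {c d : ℝ} (hcd : c ≤ d) (f u : ℝ → ℝ)
    (hf : ContinuousOn f (Icc c d)) (hu : ContinuousOn u (Icc c d)) :
    (∫ t in c..d, f t * u t) ^ 2 ≤ (∫ t in c..d, f t ^ 2) * ∫ t in c..d, u t ^ 2 := by
  have hioc : Ioc c d ⊆ Icc c d := Ioc_subset_Icc_self
  have hf2 : IntegrableOn (fun x => f x ^ 2) (Ioc c d) :=
    ((hf.pow 2).integrableOn_Icc).mono_set hioc
  have hu2 : IntegrableOn (fun x => u x ^ 2) (Ioc c d) :=
    ((hu.pow 2).integrableOn_Icc).mono_set hioc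
  have hfu : IntegrableOn (fun x => f x * u x) (Ioc c d) :=
    ((hf.mul hu).integrableOn_Icc).mono_set hioc
  rw [integral_of_le hcd, integral_of_le hcd, integral_of_le hcd]
  exact cs_integral _ f u hf2 hu2 hfu

lemma int_sq_left {c : ℝ} (S : ℝ) : ∫ t in c..S, (t - c) ^ 2 = (S - c) ^ 3 / 3 := by
  rw [intervalIntegral.integral_comp_sub_right (fun t => t ^ 2) c]
  simp [integral_pow]
  ring

lemma int_sq_right {d : ℝ} (S : ℝ) : ∫ t in S..d, (d - t) ^ 2 = (d - S) ^ 3 / 3 := by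
  have h : ∀ t : ℝ, (d - t) ^ 2 = (t - d) ^ 2 := fun t => by ring
  simp_rw [h]
  rw [intervalIntegral.integral_comp_sub_right (fun t => t ^ 2) d]
  simp [integral_pow]
  ring

lemma one_add_rpow_le (x : ℝ) (hx : 0 ≤ x) : (1 + x) ^ ((1:ℝ)/5) ≤ 1 + x ^ ((1:ℝ)/5) := by
  have h := NNReal.rpow_add_le_add_rpow (1 : NNReal) x.toNNReal
    (by norm_num : (0:ℝ) ≤ 1/5) (by norm_num : (1:ℝ)/5 ≤ 1)
  calc (1 + x) ^ ((1:ℝ)/5)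
      = ((((1 : NNReal) + x.toNNReal : NNReal) : ℝ)) ^ ((1:ℝ)/5) := by
        rw [NNReal.coe_add, NNReal.coe_one, Real.coe_toNNReal x hx]
    _ = ((((1 : NNReal) + x.toNNReal) ^ ((1:ℝ)/5) : NNReal) : ℝ) := by
        rw [NNReal.coe_rpow]
    _ ≤ (((1:NNReal) ^ ((1:ℝ)/5) + x.toNNReal ^ ((1:ℝ)/5) : NNReal) : ℝ) :=
        NNReal.coe_le_coe.mpr h
    _ = 1 + x ^ ((1:ℝ)/5) := by
        rw [NNReal.coe_add, NNReal.coe_rpow, NNReal.coe_rpow, NNReal.coe_one,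
          Real.one_rpow, Real.coe_toNNReal x hx]

lemma weightG_eq {a b : ℝ} (hab : a < b) (g : ℝ → ℝ) (t : ℝ) :
    weightG g a b t = ((∫ S in a..t, g S * ((S - a) ^ 2 * (b - S) ^ 3 / 3))
      + ∫ S in t..b, g S * ((S - a) ^ 3 * (b - S) ^ 2 / 3)) / (b - a) ^ 6 := by
  have hne : b - a ≠ 0 := ne_of_gt (sub_pos.mpr hab)
  have haux : ∀ I : ℝ, (b - a)⁻¹ * (I / (b - a) ^ 5) = I / (b - a) ^ 6 := fun I => by
    rw [div_eq_mul_inv, div_eq_mul_inv, mul_left_comm, ← mul_inv, ← pow_succ']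
  set τ := (t - a) / (b - a) with hτ
  have ht' : (b - a) * τ + a = t := by rw [hτ]; field_simp; ring
  have h0' : (b - a) * 0 + a = a := by ring
  have h1' : (b - a) * 1 + a = b := by ring
  -- first piece
  have e1 : (∫ ξ in (0:ℝ)..τ, g (a + (b - a) * ξ) * (ξ ^ 2 * (1 - ξ) ^ 3 / 3))
      = (∫ S in a..t, g S * ((S - a) ^ 2 * (b - S) ^ 3 / 3)) / (b - a) ^ 6 := by
    have hfe : (fun ξ => g (a + (b - a) * ξ) * (ξ ^ 2 * (1 - ξ) ^ 3 / 3))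
        = fun ξ => g ((b - a) * ξ + a) * (((b - a) * ξ + a - a) ^ 2
            * (b - ((b - a) * ξ + a)) ^ 3 / 3) / (b - a) ^ 5 := by
      funext ξ
      rw [add_comm a ((b - a) * ξ)]
      field_simp
      ring
    rw [hfe, integral_comp_mul_add
      (fun S => g S * ((S - a) ^ 2 * (b - S) ^ 3 / 3) / (b - a) ^ 5) hne a, h0', ht']
    rw [intervalIntegral.integral_div, smul_eq_mul]
    exact haux _
  -- second piece
  have e2 : (∫ ξ in τ..(1:ℝ), g (a + (b - a) * ξ) * ((1 - ξ) ^ 2 * ξ ^ 3 / 3))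
      = (∫ S in t..b, g S * ((S - a) ^ 3 * (b - S) ^ 2 / 3)) / (b - a) ^ 6 := by
    have hfe : (fun ξ => g (a + (b - a) * ξ) * ((1 - ξ) ^ 2 * ξ ^ 3 / 3))
        = fun ξ => g ((b - a) * ξ + a) * (((b - a) * ξ + a - a) ^ 3
            * (b - ((b - a) * ξ + a)) ^ 2 / 3) / (b - a) ^ 5 := by
      funext ξ
      rw [add_comm a ((b - a) * ξ)]
      field_simp
      ring
    rw [hfe, integral_comp_mul_add
      (fun S => g S * ((S - a) ^ 3 * (b - S) ^ 2 / 3) / (b - a) ^ 5) hne a, ht', h1']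
    rw [intervalIntegral.integral_div, smul_eq_mul]
    exact haux _
  rw [weightG, ← hτ, e1, e2]
  ring

-- representation lemma
lemma rep_lemma {a b : ℝ} (hab : a < b) (f U : ℝ → ℝ)
    (hf2 : ContDiffOn ℝ 2 f (Icc a b))
    (hUc : Continuous U)
    (hUeq : ∀ t ∈ Icc a b, U t = derivWithin (derivWithin f (Icc a b)) (Icc a b) t)
    {S : ℝ} (hS : S ∈ Ioo a b) :
    splineL f a b S - f S
      = ((b - S) / (b - a)) * (∫ t in a..S, (t - a) * U t)
        + ((S - a) / (b - a)) * (∫ t in S..b, (b - t) * U t) := by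
  set f₁ := derivWithin f (Icc a b) with hf₁
  have hud : UniqueDiffOn ℝ (Icc a b) := uniqueDiffOn_Icc hab
  have hfc : ContinuousOn f (Icc a b) := hf2.continuousOn
  have hf₁c : ContinuousOn f₁ (Icc a b) := hf2.continuousOn_derivWithin hud (by norm_num)
  have hf₁d : ContDiffOn ℝ 1 f₁ (Icc a b) := hf2.derivWithin hud (by norm_num)
  -- derivatives at interior points
  have hDf : ∀ t ∈ Ioo a b, HasDerivAt f (f₁ t) t := by
    intro t ht
    have hmem : Icc a b ∈ nhds t := Icc_mem_nhds ht.1 ht.2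
    have := (hf2.differentiableOn (by norm_num)).differentiableAt hmem
    have h2 : HasDerivAt f (deriv f t) t := this.hasDerivAt
    rwa [hf₁, derivWithin_of_mem_nhds hmem]
  have hDf₁ : ∀ t ∈ Ioo a b, HasDerivAt f₁ (U t) t := by
    intro t ht
    have hmem : Icc a b ∈ nhds t := Icc_mem_nhds ht.1 ht.2
    have := (hf₁d.differentiableOn (by norm_num)).differentiableAt hmem
    have h2 : HasDerivAt f₁ (deriv f₁ t) t := this.hasDerivAt
    rw [hUeq t (Ioo_subset_Icc_self ht), derivWithin_of_mem_nhds hmem]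
    exact h2
  have hSmem : S ∈ Icc a b := Ioo_subset_Icc_self hS
  -- first FTC :  ∫_a^S (t-a) U t = (S-a) f₁ S - f S + f a
  have ftc1 : ∫ t in a..S, (t - a) * U t = (S - a) * f₁ S - f S + f a := by
    have hkey : ∫ t in a..S, (t - a) * U t
        = ((S - a) * f₁ S - f S) - ((a - a) * f₁ a - f a) := by
      apply integral_eq_sub_of_hasDeriv_right_of_le (le_of_lt hS.1)
      · apply ContinuousOn.sub
        · exact (continuousOn_id.sub continuousOn_const).mul
            (hf₁c.mono (Icc_subset_Icc le_rfl (le_of_lt hS.2)))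
        · exact hfc.mono (Icc_subset_Icc le_rfl (le_of_lt hS.2))
      · intro t ht
        have ht' : t ∈ Ioo a b := ⟨ht.1, lt_trans ht.2 hS.2⟩
        have h1 : HasDerivAt (fun t => (t - a) * f₁ t) (1 * f₁ t + (t - a) * U t) t :=
          ((hasDerivAt_id t).sub_const a).mul (hDf₁ t ht')
        have h2 : HasDerivAt (fun t => (t - a) * f₁ t - f t) (1 * f₁ t + (t - a) * U t - f₁ t) t :=
          h1.sub (hDf t ht')
        have h3 : 1 * f₁ t + (t - a) * U t - f₁ t = (t - a) * U t := by ring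
        rw [h3] at h2
        exact h2.hasDerivWithinAt
      · exact ((continuous_id.sub continuous_const).mul hUc).intervalIntegrable _ _
    rw [hkey]; ring
  -- second FTC :  ∫_S^b (b-t) U t = f b - (b - S) * f₁ S - f S
  have ftc2 : ∫ t in S..b, (b - t) * U t = f b - ((b - S) * f₁ S + f S) := by
    have hkey : ∫ t in S..b, (b - t) * U t
        = ((b - b) * f₁ b + f b) - ((b - S) * f₁ S + f S) := by
      apply integral_eq_sub_of_hasDeriv_right_of_le (f := fun t => (b - t) * f₁ t + f t)
        (f' := fun t => (b - t) * U t) (le_of_lt hS.2)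
      · apply ContinuousOn.add
        · exact (continuousOn_const.sub continuousOn_id).mul
            (hf₁c.mono (Icc_subset_Icc (le_of_lt hS.1) le_rfl))
        · exact hfc.mono (Icc_subset_Icc (le_of_lt hS.1) le_rfl)
      · intro t ht
        have ht' : t ∈ Ioo a b := ⟨lt_trans hS.1 ht.1, ht.2⟩
        have h1 : HasDerivAt (fun t => (b - t) * f₁ t) ((0 - 1) * f₁ t + (b - t) * U t) t :=
          ((hasDerivAt_const t b).sub (hasDerivAt_id t)).mul (hDf₁ t ht')
        have h2 : HasDerivAt (fun t => (b - t) * f₁ t + f t)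
            ((0 - 1) * f₁ t + (b - t) * U t + f₁ t) t := h1.add (hDf t ht')
        have h3 : (0 - 1) * f₁ t + (b - t) * U t + f₁ t = (b - t) * U t := by ring
        rw [h3] at h2
        exact h2.hasDerivWithinAt
      · exact ((continuous_const.sub continuous_id).mul hUc).intervalIntegrable _ _
    rw [hkey]; ring
  rw [ftc1, ftc2, splineL]
  have hne : b - a ≠ 0 := ne_of_gt (sub_pos.mpr hab)
  field_simp
  ring

lemma curvInt_nonneg {a b : ℝ} (hab : a < b) (f g : ℝ → ℝ)
    (hg0 : ∀ S ∈ Icc a b, 0 ≤ g S) : 0 ≤ curvInt f g a b := by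
  apply intervalIntegral.integral_nonneg (le_of_lt hab)
  intro t ht
  have h1 : 0 ≤ weightG g a b t := by
    rw [weightG_eq hab]
    apply div_nonneg _ (by positivity)
    have i1 : 0 ≤ ∫ S in a..t, g S * ((S - a) ^ 2 * (b - S) ^ 3 / 3) := by
      apply intervalIntegral.integral_nonneg ht.1
      intro S hS
      have hSm : S ∈ Icc a b := ⟨hS.1, le_trans hS.2 ht.2⟩
      have : 0 ≤ (b - S) := sub_nonneg.mpr hSm.2
      have : 0 ≤ (S - a) := sub_nonneg.mpr hSm.1
      have := hg0 S hSm
      positivity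
    have i2 : 0 ≤ ∫ S in t..b, g S * ((S - a) ^ 3 * (b - S) ^ 2 / 3) := by
      apply intervalIntegral.integral_nonneg ht.2
      intro S hS
      have hSm : S ∈ Icc a b := ⟨le_trans ht.1 hS.1, hS.2⟩
      have : 0 ≤ (b - S) := sub_nonneg.mpr hSm.2
      have : 0 ≤ (S - a) := sub_nonneg.mpr hSm.1
      have := hg0 S hSm
      positivity
    linarith
  positivity

lemma interval_error_bound {a b : ℝ} (hab : a < b) (f g : ℝ → ℝ)
    (hf2 : ContDiffOn ℝ 2 f (Icc a b))
    (hg0 : ∀ S ∈ Icc a b, 0 ≤ g S) (hgc : ContinuousOn g (Icc a b)) :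
    ∫ S in a..b, (splineL f a b S - f S) ^ 2 * g S
      ≤ 2 * (b - a) ^ 4 * curvInt f g a b := by
  have hab' : a ≤ b := le_of_lt hab
  have hne : b - a ≠ 0 := ne_of_gt (sub_pos.mpr hab)
  have hh : (0:ℝ) < b - a := sub_pos.mpr hab
  have hud : UniqueDiffOn ℝ (Icc a b) := uniqueDiffOn_Icc hab
  set f₁ := derivWithin f (Icc a b) with hf₁
  set U₀ := derivWithin f₁ (Icc a b) with hU₀
  have hf₁d : ContDiffOn ℝ 1 f₁ (Icc a b) := hf2.derivWithin hud (by norm_num)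
  have hU₀c : ContinuousOn U₀ (Icc a b) := hf₁d.continuousOn_derivWithin hud (by norm_num)
  -- clamped versions
  set c : ℝ → ℝ := fun x => max a (min x b) with hc
  have hcc : Continuous c := continuous_const.max (continuous_id.min continuous_const)
  have hcmem : ∀ x, c x ∈ Icc a b := by
    intro x
    constructor
    · exact le_max_left _ _
    · exact max_le hab' (min_le_right _ _)
  have hcid : ∀ x ∈ Icc a b, c x = x := by
    intro x hx
    rw [hc]
    simp only [min_eq_left hx.2, max_eq_right hx.1]
  set U : ℝ → ℝ := fun x => U₀ (c x) with hU
  set G : ℝ → ℝ := fun x => g (c x) with hG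
  have hUcont : Continuous U := hU₀c.comp_continuous hcc hcmem
  have hGcont : Continuous G := hgc.comp_continuous hcc hcmem
  have hUeq : ∀ t ∈ Icc a b, U t = U₀ t := fun t ht => by rw [hU]; simp [hcid t ht]
  have hGeq : ∀ t ∈ Icc a b, G t = g t := fun t ht => by rw [hG]; simp [hcid t ht]
  have hG0 : ∀ x, 0 ≤ G x := fun x => hg0 _ (hcmem x)
  -- primitives
  set P : ℝ → ℝ := fun S => ∫ t in a..S, (t - a) * U t with hP
  set Q : ℝ → ℝ := fun S => ∫ t in S..b, (b - t) * U t with hQ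
  set R₁ : ℝ → ℝ := fun S => ∫ t in a..S, U t ^ 2 with hR₁
  set R₂ : ℝ → ℝ := fun S => ∫ t in S..b, U t ^ 2 with hR₂
  set ψ₁ : ℝ → ℝ := fun S => (b - S) ^ 2 * (S - a) ^ 3 / 3 with hψ₁
  set ψ₂ : ℝ → ℝ := fun S => (S - a) ^ 2 * (b - S) ^ 3 / 3 with hψ₂
  have hUsq : Continuous (fun t => U t ^ 2) := hUcont.pow 2
  have hR₁deriv : ∀ S : ℝ, HasDerivAt R₁ (U S ^ 2) S := by
    intro S
    exact intervalIntegral.integral_hasDerivAt_right (hUsq.intervalIntegrable _ _)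
      hUsq.stronglyMeasurable.stronglyMeasurableAtFilter hUsq.continuousAt
  have hR₁cont : Continuous R₁ := by
    apply continuous_iff_continuousAt.mpr
    exact fun S => (hR₁deriv S).continuousAt
  have hRadd : ∀ S : ℝ, R₁ S + R₂ S = ∫ t in a..b, U t ^ 2 := fun S =>
    integral_add_adjacent_intervals (hUsq.intervalIntegrable _ _) (hUsq.intervalIntegrable _ _)
  have hR₂eq : R₂ = fun S => (∫ t in a..b, U t ^ 2) - R₁ S := by
    funext S; have := hRadd S; linarith
  have hR₂cont : Continuous R₂ := by
    rw [hR₂eq]; exact continuous_const.sub hR₁cont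
  have hR₂deriv : ∀ S : ℝ, HasDerivAt R₂ (-(U S ^ 2)) S := by
    intro S
    rw [hR₂eq]
    exact ((hasDerivAt_const S _).sub (hR₁deriv S)).congr_deriv (by ring)
  have hR₁0 : R₁ a = 0 := by rw [hR₁]; simp
  have hR₂0 : R₂ b = 0 := by rw [hR₂]; simp
  -- pointwise bound on Ioo
  have hpt : ∀ S ∈ Ioo a b, (splineL f a b S - f S) ^ 2 * g S
      ≤ 2 / (b - a) ^ 2 * (R₁ S * (G S * ψ₁ S) + R₂ S * (G S * ψ₂ S)) := by
    intro S hS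
    have hSm : S ∈ Icc a b := Ioo_subset_Icc_self hS
    have hrep := rep_lemma hab f U hf2 hUcont (fun t ht => by rw [hUeq t ht, hU₀]) hS
    have hPQ : splineL f a b S - f S = ((b - S) / (b - a)) * P S + ((S - a) / (b - a)) * Q S := by
      rw [hrep, hP, hQ]
    -- Cauchy-Schwarz bounds
    have hUIcc1 : ContinuousOn U (Icc a S) := hUcont.continuousOn
    have hcs1 : P S ^ 2 ≤ ((S - a) ^ 3 / 3) * R₁ S := by
      have h1 := cs_interval (le_of_lt hS.1) (fun t => t - a) U
        ((continuous_id.sub continuous_const).continuousOn) hUcont.continuousOn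
      rwa [int_sq_left S] at h1
    have hcs2 : Q S ^ 2 ≤ ((b - S) ^ 3 / 3) * R₂ S := by
      have h1 := cs_interval (le_of_lt hS.2) (fun t => b - t) U
        ((continuous_const.sub continuous_id).continuousOn) hUcont.continuousOn
      rwa [int_sq_right S] at h1
    have hR₁nn : 0 ≤ R₁ S := intervalIntegral.integral_nonneg (le_of_lt hS.1)
      (fun t _ => sq_nonneg _)
    have hR₂nn : 0 ≤ R₂ S := intervalIntegral.integral_nonneg (le_of_lt hS.2)
      (fun t _ => sq_nonneg _)
    have hbS : (0:ℝ) ≤ b - S := sub_nonneg.mpr hSm.2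
    have hSa : (0:ℝ) ≤ S - a := sub_nonneg.mpr hSm.1
    have hgS : 0 ≤ g S := hg0 S hSm
    have hsq : (splineL f a b S - f S) ^ 2
        ≤ 2 / (b - a) ^ 2 * (R₁ S * ψ₁ S + R₂ S * ψ₂ S) := by
      rw [hPQ, hψ₁, hψ₂]
      have key : (((b - S) / (b - a)) * P S + ((S - a) / (b - a)) * Q S) ^ 2
          ≤ 2 * ((b - S) / (b - a)) ^ 2 * P S ^ 2 + 2 * ((S - a) / (b - a)) ^ 2 * Q S ^ 2 := by
        nlinarith [sq_nonneg (((b - S) / (b - a)) * P S - ((S - a) / (b - a)) * Q S)]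
      have h2 : 2 * ((b - S) / (b - a)) ^ 2 * P S ^ 2
          ≤ 2 * ((b - S) / (b - a)) ^ 2 * (((S - a) ^ 3 / 3) * R₁ S) := by
        apply mul_le_mul_of_nonneg_left hcs1; positivity
      have h3 : 2 * ((S - a) / (b - a)) ^ 2 * Q S ^ 2
          ≤ 2 * ((S - a) / (b - a)) ^ 2 * (((b - S) ^ 3 / 3) * R₂ S) := by
        apply mul_le_mul_of_nonneg_left hcs2; positivity
      have heq1 : 2 * ((b - S) / (b - a)) ^ 2 * (((S - a) ^ 3 / 3) * R₁ S)
          = 2 / (b - a) ^ 2 * (R₁ S * ((b - S) ^ 2 * (S - a) ^ 3 / 3)) := by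
        field_simp
      have heq2 : 2 * ((S - a) / (b - a)) ^ 2 * (((b - S) ^ 3 / 3) * R₂ S)
          = 2 / (b - a) ^ 2 * (R₂ S * ((S - a) ^ 2 * (b - S) ^ 3 / 3)) := by
        field_simp
      calc (((b - S) / (b - a)) * P S + ((S - a) / (b - a)) * Q S) ^ 2
          ≤ 2 * ((b - S) / (b - a)) ^ 2 * P S ^ 2 + 2 * ((S - a) / (b - a)) ^ 2 * Q S ^ 2 := key
        _ ≤ 2 * ((b - S) / (b - a)) ^ 2 * (((S - a) ^ 3 / 3) * R₁ S)
            + 2 * ((S - a) / (b - a)) ^ 2 * (((b - S) ^ 3 / 3) * R₂ S) := add_le_add h2 h3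
        _ = 2 / (b - a) ^ 2 * (R₁ S * ((b - S) ^ 2 * (S - a) ^ 3 / 3)
            + R₂ S * ((S - a) ^ 2 * (b - S) ^ 3 / 3)) := by rw [heq1, heq2]; ring
    calc (splineL f a b S - f S) ^ 2 * g S
        ≤ (2 / (b - a) ^ 2 * (R₁ S * ψ₁ S + R₂ S * ψ₂ S)) * g S := by
          apply mul_le_mul_of_nonneg_right hsq hgS
      _ = 2 / (b - a) ^ 2 * (R₁ S * (G S * ψ₁ S) + R₂ S * (G S * ψ₂ S)) := by
          rw [hGeq S hSm]; ring
  -- RHS integrand and its continuity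
  set Φ : ℝ → ℝ := fun S => 2 / (b - a) ^ 2 * (R₁ S * (G S * ψ₁ S) + R₂ S * (G S * ψ₂ S))
    with hΦ
  have hψ₁cont : Continuous ψ₁ := by
    rw [hψ₁]
    exact (((continuous_const.sub continuous_id).pow 2).mul
      ((continuous_id.sub continuous_const).pow 3)).div_const 3
  have hψ₂cont : Continuous ψ₂ := by
    rw [hψ₂]
    exact (((continuous_id.sub continuous_const).pow 2).mul
      ((continuous_const.sub continuous_id).pow 3)).div_const 3
  have hΦcont : Continuous Φ := by
    rw [hΦ]
    exact continuous_const.mul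
      (((hR₁cont.mul (hGcont.mul hψ₁cont))).add ((hR₂cont.mul (hGcont.mul hψ₂cont))))
  have hsplcont : Continuous (fun S => splineL f a b S) := by
    unfold splineL
    exact (((continuous_const.sub continuous_id).div_const _).mul continuous_const).add
      (((continuous_id.sub continuous_const).div_const _).mul continuous_const)
  have hecont : ContinuousOn (fun S => (splineL f a b S - f S) ^ 2 * g S) (Icc a b) :=
    (((hsplcont.continuousOn.sub hf2.continuousOn)).pow 2).mul hgc
  have hint1 : IntervalIntegrable (fun S => (splineL f a b S - f S) ^ 2 * g S) volume a b := by
    apply ContinuousOn.intervalIntegrable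
    rwa [uIcc_of_le hab']
  have hint2 : IntervalIntegrable Φ volume a b := hΦcont.intervalIntegrable _ _
  have hmono : ∫ S in a..b, (splineL f a b S - f S) ^ 2 * g S ≤ ∫ S in a..b, Φ S := by
    apply intervalIntegral.integral_mono_ae_restrict hab' hint1 hint2
    have h1 : volume.restrict (Icc a b) = volume.restrict (Ioo a b) :=
      (Measure.restrict_congr_set Ioo_ae_eq_Icc).symm
    rw [h1]
    filter_upwards [ae_restrict_mem measurableSet_Ioo] with S hS
    exact hpt S hS
  -- integration by parts
  set A₁ : ℝ → ℝ := fun t => ∫ s in t..b, G s * ψ₁ s with hA₁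
  set A₂ : ℝ → ℝ := fun t => ∫ s in a..t, G s * ψ₂ s with hA₂
  have hGψ₁ : Continuous (fun s => G s * ψ₁ s) := hGcont.mul hψ₁cont
  have hGψ₂ : Continuous (fun s => G s * ψ₂ s) := hGcont.mul hψ₂cont
  have hv₁deriv : ∀ t : ℝ, HasDerivAt (fun t => ∫ s in b..t, G s * ψ₁ s) (G t * ψ₁ t) t :=
    fun t => intervalIntegral.integral_hasDerivAt_right (hGψ₁.intervalIntegrable _ _)
      hGψ₁.stronglyMeasurable.stronglyMeasurableAtFilter hGψ₁.continuousAt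
  have hA₂deriv : ∀ t : ℝ, HasDerivAt A₂ (G t * ψ₂ t) t :=
    fun t => intervalIntegral.integral_hasDerivAt_right (hGψ₂.intervalIntegrable _ _)
      hGψ₂.stronglyMeasurable.stronglyMeasurableAtFilter hGψ₂.continuousAt
  have hA₁eq : ∀ t, A₁ t = -(∫ s in b..t, G s * ψ₁ s) := fun t =>
    (intervalIntegral.integral_symm _ _)
  have hA₁cont : Continuous A₁ := by
    have : Continuous (fun t => -(∫ s in b..t, G s * ψ₁ s)) :=
      (continuous_iff_continuousAt.mpr fun t => (hv₁deriv t).continuousAt).neg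
    exact this.congr fun t => (hA₁eq t).symm
  have hA₂cont : Continuous A₂ :=
    continuous_iff_continuousAt.mpr fun t => (hA₂deriv t).continuousAt
  have parts1 : ∫ t in a..b, R₁ t * (G t * ψ₁ t) = ∫ t in a..b, U t ^ 2 * A₁ t := by
    have h := intervalIntegral.integral_mul_deriv_eq_deriv_mul_of_hasDerivAt
      (a := a) (b := b) (u := R₁) (v := fun t => ∫ s in b..t, G s * ψ₁ s)
      (u' := fun t => U t ^ 2) (v' := fun t => G t * ψ₁ t)
      (hR₁cont.continuousOn) ((continuous_iff_continuousAt.mpr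
        fun t => (hv₁deriv t).continuousAt).continuousOn)
      (fun x _ => hR₁deriv x) (fun x _ => hv₁deriv x)
      (hUsq.intervalIntegrable _ _) (hGψ₁.intervalIntegrable _ _)
    rw [h, hR₁0]
    simp only [intervalIntegral.integral_same, mul_zero, zero_mul, sub_zero, zero_sub]
    rw [← intervalIntegral.integral_neg]
    apply intervalIntegral.integral_congr
    intro t _
    simp only [hA₁eq t]
    ring
  have parts2 : ∫ t in a..b, R₂ t * (G t * ψ₂ t) = ∫ t in a..b, U t ^ 2 * A₂ t := by
    have h := intervalIntegral.integral_mul_deriv_eq_deriv_mul_of_hasDerivAt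
      (a := a) (b := b) (u := R₂) (v := A₂)
      (u' := fun t => -(U t ^ 2)) (v' := fun t => G t * ψ₂ t)
      (hR₂cont.continuousOn) (hA₂cont.continuousOn)
      (fun x _ => hR₂deriv x) (fun x _ => hA₂deriv x)
      ((hUsq.neg).intervalIntegrable _ _) (hGψ₂.intervalIntegrable _ _)
    rw [h, hR₂0]
    have hA₂0 : A₂ a = 0 := by rw [hA₂]; simp
    rw [hA₂0]
    simp only [zero_mul, mul_zero, sub_zero, zero_sub]
    rw [← intervalIntegral.integral_neg]
    apply intervalIntegral.integral_congr
    intro t _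
    ring
  -- combine
  set J := ∫ t in a..b, (A₁ t + A₂ t) * U t ^ 2 with hJ
  have hΦint : ∫ S in a..b, Φ S = 2 / (b - a) ^ 2 * J := by
    rw [hΦ]
    rw [intervalIntegral.integral_const_mul]
    rw [intervalIntegral.integral_add (f := fun x => R₁ x * (G x * ψ₁ x))
      (g := fun x => R₂ x * (G x * ψ₂ x)) ((hR₁cont.mul (hGcont.mul hψ₁cont)).intervalIntegrable _ _)
      ((hR₂cont.mul (hGcont.mul hψ₂cont)).intervalIntegrable _ _)]
    rw [parts1, parts2, hJ]
    rw [← intervalIntegral.integral_add (f := fun t => U t ^ 2 * A₁ t)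
      (g := fun t => U t ^ 2 * A₂ t) ((hUsq.mul hA₁cont).intervalIntegrable _ _)
      ((hUsq.mul hA₂cont).intervalIntegrable _ _)]
    congr 1
    apply intervalIntegral.integral_congr
    intro t _
    ring
  -- identification with curvInt
  have hbne : ∀ᵐ t : ℝ, t ≠ b := by
    rw [Filter.eventually_iff, mem_ae_iff]
    simpa using Real.volume_singleton
  have hcurv : curvInt f g a b = J / (b - a) ^ 6 := by
    rw [curvInt, hJ, ← intervalIntegral.integral_div]
    apply intervalIntegral.integral_congr_ae
    filter_upwards [hbne] with t htb htI
    have htIoo : t ∈ Ioo a b := by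
      rw [uIoc_of_le hab'] at htI
      exact ⟨htI.1, lt_of_le_of_ne htI.2 htb⟩
    have htm : t ∈ Icc a b := Ioo_subset_Icc_self htIoo
    -- weightG identification
    have hw : weightG g a b t = (A₂ t + A₁ t) / (b - a) ^ 6 := by
      rw [weightG_eq hab]
      congr 1
      have e2 : A₂ t = ∫ S in a..t, g S * ((S - a) ^ 2 * (b - S) ^ 3 / 3) := by
        rw [hA₂]
        apply intervalIntegral.integral_congr
        intro S hS
        rw [uIcc_of_le htm.1] at hS
        simp only [hψ₂, hGeq S ⟨hS.1, le_trans hS.2 htm.2⟩]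
      have e1 : A₁ t = ∫ S in t..b, g S * ((S - a) ^ 3 * (b - S) ^ 2 / 3) := by
        rw [hA₁]
        apply intervalIntegral.integral_congr
        intro S hS
        rw [uIcc_of_le htm.2] at hS
        simp only [hψ₁, hGeq S ⟨le_trans htm.1 hS.1, hS.2⟩]
        ring
      rw [e1, e2]
    -- second derivative identification
    have hd : deriv (deriv f) t = U t := by
      have hIoo : Ioo a b ∈ nhds t := Ioo_mem_nhds htIoo.1 htIoo.2
      have hev : deriv f =ᶠ[nhds t] f₁ := by
        apply Filter.eventually_of_mem hIoo
        intro s hs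
        have hmem : Icc a b ∈ nhds s := Icc_mem_nhds hs.1 hs.2
        rw [hf₁, ← derivWithin_of_mem_nhds hmem]
      have h1 : deriv (deriv f) t = deriv f₁ t := hev.deriv_eq
      have hmem : Icc a b ∈ nhds t := Icc_mem_nhds htIoo.1 htIoo.2
      rw [h1, ← derivWithin_of_mem_nhds hmem, ← hU₀, ← hUeq t htm]
    rw [hw, hd]
    ring
  calc ∫ S in a..b, (splineL f a b S - f S) ^ 2 * g S
      ≤ ∫ S in a..b, Φ S := hmono
    _ = 2 / (b - a) ^ 2 * J := hΦint
    _ = 2 * (b - a) ^ 4 * curvInt f g a b := by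
        rw [hcurv]
        field_simp

/-- main theorem -/
theorem equidistribution_explicit_bound
    (n : ℕ) (hn : 1 ≤ n) (X : ℕ → ℝ) (hX0 : 0 < X 0)
    (hXmono : ∀ i < n, X i < X (i + 1))
    (f g : ℝ → ℝ)
    (hf : ContinuousOn f (Set.Icc (X 0) (X n)))
    (hf2 : ∀ i < n, ContDiffOn ℝ 2 f (Set.Icc (X i) (X (i + 1))))
    (hg0 : ∀ S ∈ Set.Icc (X 0) (X n), 0 ≤ g S)
    (hgc : ContinuousOn g (Set.Icc (X 0) (X n)))
    (hα : 0 < alphaH f g (2 / 5) n X)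
    (hequi : ∀ i < n, (X (i + 1) - X i) * rhoAdapt f g (2 / 5) n X i =
      (1 / (n : ℝ)) * ∑ j ∈ Finset.range n, (X (j + 1) - X j) * rhoAdapt f g (2 / 5) n X j) :
    Real.sqrt (∑ i ∈ Finset.range n,
        ∫ S in (X i)..(X (i + 1)), (splineL f (X i) (X (i + 1)) S - f S) ^ 2 * g S)
      ≤ Real.sqrt (2 ^ 6 * alphaH f g (2 / 5) n X * (X n - X 0) ^ 5) * ((n : ℝ) ^ 2)⁻¹ := by
  set α := alphaH f g (2 / 5) n X with hαdef
  -- monotonicity of the partition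
  have hmono : ∀ j, j ≤ n → ∀ i, i ≤ j → X i ≤ X j := by
    intro j
    induction j with
    | zero => intro _ i hi; rw [Nat.le_zero.mp hi]
    | succ k ih =>
      intro hk i hi
      rcases Nat.eq_or_lt_of_le hi with h | h
      · rw [h]
      · exact le_trans (ih (by omega) i (by omega)) (hXmono k (by omega)).le
  have hLpos : 0 < X n - X 0 := by
    have h1 : X 0 < X 1 := hXmono 0 hn
    have h2 : X 1 ≤ X n := hmono n le_rfl 1 hn
    linarith
  have hIcc : ∀ i < n, Icc (X i) (X (i + 1)) ⊆ Icc (X 0) (X n) := by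
    intro i hi
    exact Icc_subset_Icc (hmono i (by omega) 0 (by omega)) (hmono n le_rfl (i + 1) (by omega))
  have hh : ∀ i < n, 0 < X (i + 1) - X i := fun i hi => sub_pos.mpr (hXmono i hi)
  have hC0 : ∀ i < n, 0 ≤ curvInt f g (X i) (X (i + 1)) := fun i hi =>
    curvInt_nonneg (hXmono i hi) f g (fun S hS => hg0 S (hIcc i hi hS))
  -- ρ facts
  have hρdef : ∀ i, rhoAdapt f g (2 / 5) n X i
      = (1 + (1 / (α * (X (i + 1) - X i))) * curvInt f g (X i) (X (i + 1))) ^ ((1:ℝ)/5) := by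
    intro i; rw [rhoAdapt, ← hαdef]; norm_num
  have hbase0 : ∀ i < n, 0 ≤ (1 / (α * (X (i + 1) - X i))) * curvInt f g (X i) (X (i + 1)) := by
    intro i hi
    have := hh i hi; have := hC0 i hi
    positivity
  set M := ∑ j ∈ Finset.range n, (X (j + 1) - X j) * rhoAdapt f g (2 / 5) n X j with hM
  have hρ0 : ∀ i < n, 0 ≤ rhoAdapt f g (2 / 5) n X i := by
    intro i hi; rw [hρdef]
    exact Real.rpow_nonneg (by linarith [hbase0 i hi]) _
  have hM0 : 0 ≤ M := Finset.sum_nonneg fun j hj =>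
    mul_nonneg (hh j (Finset.mem_range.mp hj)).le (hρ0 j (Finset.mem_range.mp hj))
  have hn0 : (0:ℝ) < (n:ℝ) := by exact_mod_cast hn
  -- per-interval bound
  have hkey : ∀ i < n, (∫ S in (X i)..(X (i + 1)), (splineL f (X i) (X (i + 1)) S - f S) ^ 2 * g S)
      ≤ 2 * α * ((1 / (n:ℝ)) * M) ^ 5 := by
    intro i hi
    have h1 := interval_error_bound (hXmono i hi) f g (hf2 i hi)
      (fun S hS => hg0 S (hIcc i hi hS)) (hgc.mono (hIcc i hi))
    set hi' := X (i + 1) - X i with hhi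
    set Ci := curvInt f g (X i) (X (i + 1)) with hCi
    have hhp : 0 < hi' := hh i hi
    have hρ5 : rhoAdapt f g (2 / 5) n X i ^ (5:ℕ) = 1 + (1 / (α * hi')) * Ci := by
      rw [hρdef, ← Real.rpow_natCast (((1:ℝ) + 1 / (α * hi') * Ci) ^ ((1:ℝ)/5)) 5,
        ← Real.rpow_mul (by linarith [hbase0 i hi])]
      norm_num
    have h2 : 2 * hi' ^ 4 * Ci = 2 * α * hi' ^ 5 * ((1 / (α * hi')) * Ci) := by
      field_simp
    have h3 : 2 * α * hi' ^ 5 * ((1 / (α * hi')) * Ci)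
        ≤ 2 * α * hi' ^ 5 * (1 + (1 / (α * hi')) * Ci) := by
      apply mul_le_mul_of_nonneg_left (by linarith [hbase0 i hi]) (by positivity)
    have h4 : 2 * α * hi' ^ 5 * (1 + (1 / (α * hi')) * Ci)
        = 2 * α * (hi' * rhoAdapt f g (2 / 5) n X i) ^ 5 := by
      rw [mul_pow, ← hρ5]
      ring
    have h5 : hi' * rhoAdapt f g (2 / 5) n X i = (1 / (n:ℝ)) * M := hequi i hi
    calc (∫ S in (X i)..(X (i + 1)), (splineL f (X i) (X (i + 1)) S - f S) ^ 2 * g S)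
        ≤ 2 * hi' ^ 4 * Ci := h1
      _ = 2 * α * hi' ^ 5 * ((1 / (α * hi')) * Ci) := h2
      _ ≤ 2 * α * hi' ^ 5 * (1 + (1 / (α * hi')) * Ci) := h3
      _ = 2 * α * (hi' * rhoAdapt f g (2 / 5) n X i) ^ 5 := h4
      _ = 2 * α * ((1 / (n:ℝ)) * M) ^ 5 := by rw [h5]
  -- sum bound
  have hsum : (∑ i ∈ Finset.range n,
      ∫ S in (X i)..(X (i + 1)), (splineL f (X i) (X (i + 1)) S - f S) ^ 2 * g S)
      ≤ (n:ℝ) * (2 * α * ((1 / (n:ℝ)) * M) ^ 5) := by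
    calc (∑ i ∈ Finset.range n,
        ∫ S in (X i)..(X (i + 1)), (splineL f (X i) (X (i + 1)) S - f S) ^ 2 * g S)
        ≤ ∑ i ∈ Finset.range n, 2 * α * ((1 / (n:ℝ)) * M) ^ 5 :=
          Finset.sum_le_sum fun i hi => hkey i (Finset.mem_range.mp hi)
      _ = (n:ℝ) * (2 * α * ((1 / (n:ℝ)) * M) ^ 5) := by
          rw [Finset.sum_const, Finset.card_range, nsmul_eq_mul]
  -- M ≤ 2 L
  have hαval : α = ((1 / (X n - X 0)) * ∑ i ∈ Finset.range n, (X (i + 1) - X i) *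
      ((1 / (X (i + 1) - X i)) * curvInt f g (X i) (X (i + 1))) ^ ((1:ℝ)/5)) ^ (5:ℝ) := by
    rw [hαdef, alphaH]; norm_num
  set T := ∑ i ∈ Finset.range n, (X (i + 1) - X i) *
      ((1 / (X (i + 1) - X i)) * curvInt f g (X i) (X (i + 1))) ^ ((1:ℝ)/5) with hT
  have hT0 : 0 ≤ T := Finset.sum_nonneg fun i hi =>
    mul_nonneg (hh i (Finset.mem_range.mp hi)).le (Real.rpow_nonneg (by
      have := hh i (Finset.mem_range.mp hi); have := hC0 i (Finset.mem_range.mp hi); positivity) _)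
  have hbase : 0 ≤ (1 / (X n - X 0)) * T := by positivity
  have hTpos : 0 < T := by
    by_contra h
    push_neg at h
    have hT0' : T = 0 := le_antisymm h hT0
    rw [hαval, hT0'] at hα
    simp [Real.rpow_natCast] at hα
  have hα15 : α ^ ((1:ℝ)/5) = (1 / (X n - X 0)) * T := by
    rw [hαval, ← Real.rpow_mul hbase]
    norm_num
  have hLsum : ∑ j ∈ Finset.range n, (X (j + 1) - X j) = X n - X 0 := by
    rw [Finset.sum_range_sub (fun i => X i)]
  have hMle : M ≤ 2 * (X n - X 0) := by
    have hstep : ∀ j ∈ Finset.range n, (X (j + 1) - X j) * rhoAdapt f g (2 / 5) n X j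
        ≤ (X (j + 1) - X j) + (1/α) ^ ((1:ℝ)/5) * ((X (j + 1) - X j) *
          ((1 / (X (j + 1) - X j)) * curvInt f g (X j) (X (j + 1))) ^ ((1:ℝ)/5)) := by
      intro j hj
      have hjn := Finset.mem_range.mp hj
      have hhp := hh j hjn
      have hx0 := hbase0 j hjn
      have h1 : rhoAdapt f g (2 / 5) n X j
          ≤ 1 + ((1 / (α * (X (j + 1) - X j))) * curvInt f g (X j) (X (j + 1))) ^ ((1:ℝ)/5) := by
        rw [hρdef]
        exact one_add_rpow_le _ hx0
      have h2 : ((1 / (α * (X (j + 1) - X j))) * curvInt f g (X j) (X (j + 1))) ^ ((1:ℝ)/5)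
          = (1/α) ^ ((1:ℝ)/5) * ((1 / (X (j + 1) - X j)) * curvInt f g (X j) (X (j + 1))) ^ ((1:ℝ)/5) := by
        rw [← Real.mul_rpow (by positivity) (by
          have := hC0 j hjn; positivity)]
        congr 1
        field_simp
      rw [h2] at h1
      have := mul_le_mul_of_nonneg_left h1 hhp.le
      calc (X (j + 1) - X j) * rhoAdapt f g (2 / 5) n X j
          ≤ (X (j + 1) - X j) * (1 + (1/α) ^ ((1:ℝ)/5) *
            ((1 / (X (j + 1) - X j)) * curvInt f g (X j) (X (j + 1))) ^ ((1:ℝ)/5)) := this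
        _ = (X (j + 1) - X j) + (1/α) ^ ((1:ℝ)/5) * ((X (j + 1) - X j) *
            ((1 / (X (j + 1) - X j)) * curvInt f g (X j) (X (j + 1))) ^ ((1:ℝ)/5)) := by ring
    have hsum2 : M ≤ (∑ j ∈ Finset.range n, (X (j + 1) - X j))
        + (1/α) ^ ((1:ℝ)/5) * T := by
      calc M ≤ ∑ j ∈ Finset.range n, ((X (j + 1) - X j) + (1/α) ^ ((1:ℝ)/5) *
            ((X (j + 1) - X j) *
              ((1 / (X (j + 1) - X j)) * curvInt f g (X j) (X (j + 1))) ^ ((1:ℝ)/5))) :=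
            Finset.sum_le_sum hstep
        _ = (∑ j ∈ Finset.range n, (X (j + 1) - X j)) + (1/α) ^ ((1:ℝ)/5) * T := by
            rw [Finset.sum_add_distrib, hT, Finset.mul_sum]
    have hfinal : (1/α) ^ ((1:ℝ)/5) * T = X n - X 0 := by
      have h1 : (1/α) ^ ((1:ℝ)/5) = (α ^ ((1:ℝ)/5))⁻¹ := by
        rw [one_div, Real.inv_rpow hα.le]
      rw [h1, hα15]
      have hLne : X n - X 0 ≠ 0 := ne_of_gt hLpos
      field_simp
    rw [hLsum, hfinal] at hsum2
    linarith
  -- final computation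
  have hMn0 : 0 ≤ (1 / (n:ℝ)) * M := by positivity
  have hpow : ((1 / (n:ℝ)) * M) ^ 5 ≤ ((1 / (n:ℝ)) * (2 * (X n - X 0))) ^ 5 := by
    apply pow_le_pow_left₀ hMn0
    apply mul_le_mul_of_nonneg_left hMle (by positivity)
  have hmain : (n:ℝ) * (2 * α * ((1 / (n:ℝ)) * M) ^ 5)
      ≤ 2 ^ 6 * α * (X n - X 0) ^ 5 * (((n:ℝ) ^ 2)⁻¹) ^ 2 := by
    have h1 : (n:ℝ) * (2 * α * ((1 / (n:ℝ)) * M) ^ 5)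
        ≤ (n:ℝ) * (2 * α * ((1 / (n:ℝ)) * (2 * (X n - X 0))) ^ 5) := by
      apply mul_le_mul_of_nonneg_left _ hn0.le
      apply mul_le_mul_of_nonneg_left hpow (by positivity)
    have h2 : (n:ℝ) * (2 * α * ((1 / (n:ℝ)) * (2 * (X n - X 0))) ^ 5)
        = 2 ^ 6 * α * (X n - X 0) ^ 5 * (((n:ℝ) ^ 2)⁻¹) ^ 2 := by
      field_simp
    linarith
  have hfin : (∑ i ∈ Finset.range n,
      ∫ S in (X i)..(X (i + 1)), (splineL f (X i) (X (i + 1)) S - f S) ^ 2 * g S)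
      ≤ 2 ^ 6 * α * (X n - X 0) ^ 5 * (((n:ℝ) ^ 2)⁻¹) ^ 2 := le_trans hsum hmain
  calc Real.sqrt (∑ i ∈ Finset.range n,
        ∫ S in (X i)..(X (i + 1)), (splineL f (X i) (X (i + 1)) S - f S) ^ 2 * g S)
      ≤ Real.sqrt (2 ^ 6 * α * (X n - X 0) ^ 5 * (((n:ℝ) ^ 2)⁻¹) ^ 2) :=
        Real.sqrt_le_sqrt hfin
    _ = Real.sqrt (2 ^ 6 * α * (X n - X 0) ^ 5) * ((n : ℝ) ^ 2)⁻¹ := by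
        rw [Real.sqrt_mul (by positivity), Real.sqrt_sq (by positivity)]
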